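/- Suppose F satisfies (F1)–(F3), each estimator η_N satisfies (A1)–(A2), λ ∈ (0, 1/C₅) with C₅ := C₃ C₁ and C₃ := 1 + β/ν, and the perturbed contraction property holds: there are constants 0 < q < 1 and C₇ > 0 with η_{N+1}(u*_{N+1})² ≤ q η_N(u*_N)² + C₇ ‖u*_{N+1} − u*_N‖_X² for all N ≥ 0. Assume that for each N ≥ 0 there are elements w_N, u_N ∈ X_N such that a(w_N; u_N, v) = a(w_N; w_N, v) − ⟨F(w_N), v⟩ for all v ∈ X_N and ‖u_N − w_N‖_X ≤ λ η_N(u_N). Set γ := ν/(2C₇) and q_Δ := (L C₂² + 2γq)/(L C₂² + 2γ). Then there exists a constant C₈ > 0 such that η_{N+K}(u_{N+K})² ≤ C₈ q_Δ^K η_N(u_N)² for all N, K ≥ 0, i.e. the estimators decay at a linear rate. -/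

import Mathlib

set_option autoImplicit false
set_option maxHeartbeats 1000000
lemma deriv_lower (g g' : ℝ → ℝ) (hg : ∀ t, HasDerivAt g (g' t) t)
    (c : ℝ) (hlow : ∀ t ∈ Set.Icc (0:ℝ) 1, c * t ≤ g' t) :
    c / 2 ≤ g 1 - g 0 := by
  set φ : ℝ → ℝ := fun t => g t - c * t ^ 2 / 2 with hφdef
  have hφd : ∀ t, HasDerivAt φ (g' t - c * t) t := by
    intro t
    have h1 : HasDerivAt (fun t : ℝ => c * t ^ 2 / 2) (c * t) t := by
      have := ((hasDerivAt_pow 2 t).const_mul c).div_const 2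
      refine this.congr_deriv ?_
      ring
    exact (hg t).sub h1
  have hmono : MonotoneOn φ (Set.Icc 0 1) := by
    apply monotoneOn_of_deriv_nonneg (convex_Icc 0 1)
    · exact fun t _ => ((hφd t).continuousAt).continuousWithinAt
    · intro t ht
      exact ((hφd t).differentiableAt).differentiableWithinAt
    · intro t ht
      rw [interior_Icc] at ht
      rw [(hφd t).deriv]
      have := hlow t ⟨le_of_lt ht.1, le_of_lt ht.2⟩
      linarith
  have := hmono (Set.mem_Icc.mpr ⟨le_refl 0, zero_le_one⟩)
    (Set.mem_Icc.mpr ⟨zero_le_one, le_refl 1⟩) zero_le_one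
  simp only [hφdef] at this
  nlinarith [this]

lemma deriv_upper (g g' : ℝ → ℝ) (hg : ∀ t, HasDerivAt g (g' t) t)
    (c : ℝ) (hup : ∀ t ∈ Set.Icc (0:ℝ) 1, g' t ≤ c * t) :
    g 1 - g 0 ≤ c / 2 := by
  have := deriv_lower (fun t => -g t) (fun t => -g' t)
    (fun t => (hg t).neg) (-c)
    (fun t ht => by have := hup t ht; simp; linarith)
  simp at this
  linarith

lemma pot_lower {X : Type*} [NormedAddCommGroup X] [InnerProductSpace ℝ X]
    (F : X → X →L[ℝ] ℝ) (ν : ℝ)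
    (hF2 : ∀ u v : X, ν * ‖u - v‖ ^ 2 ≤ F u (u - v) - F v (u - v))
    (H : X → ℝ)
    (hF3 : ∀ v w : X, ∀ t : ℝ, HasDerivAt (fun s : ℝ => H (v + s • w)) (F (v + t • w) w) t)
    (b x : X) (hb : F b (x - b) = 0) :
    ν / 2 * ‖x - b‖ ^ 2 ≤ H x - H b := by
  set d := x - b with hd
  have key : ν * ‖d‖ ^ 2 / 2 ≤ H (b + (1:ℝ) • d) - H (b + (0:ℝ) • d) := by
    apply deriv_lower (fun s => H (b + s • d)) (fun t => F (b + t • d) d) (hF3 b d)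
    intro t ht
    rcases eq_or_lt_of_le ht.1 with h0 | h0
    · have : F (b + t • d) d = F b d := by rw [← h0]; simp
      rw [this, hb, ← h0]
      simp
    · have h := hF2 (b + t • d) b
      have he : b + t • d - b = t • d := by abel
      rw [he] at h
      have h1 : F (b + t • d) (t • d) = t * F (b + t • d) d := by
        rw [map_smul]; rfl
      have h2 : F b (t • d) = t * F b d := by rw [map_smul]; rfl
      rw [h1, h2, hb] at h
      have hn : ‖t • d‖ = t * ‖d‖ := by
        rw [norm_smul, Real.norm_eq_abs, abs_of_pos h0]
      rw [hn] at h
      have : ν * (t * ‖d‖) ^ 2 ≤ t * F (b + t • d) d := by linarith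
      have ht2 : ν * ‖d‖ ^ 2 * t * t ≤ F (b + t • d) d * t := by nlinarith
      exact le_of_mul_le_mul_right (by nlinarith) h0
  have hx : b + (1:ℝ) • d = x := by rw [one_smul, hd]; abel
  have hb0 : b + (0:ℝ) • d = b := by simp
  rw [hx, hb0] at key
  linarith

lemma pot_upper {X : Type*} [NormedAddCommGroup X] [InnerProductSpace ℝ X]
    (F : X → X →L[ℝ] ℝ) (L : ℝ)
    (hF1 : ∀ u v w : X, |F u w - F v w| ≤ L * ‖u - v‖ * ‖w‖)
    (H : X → ℝ)
    (hF3 : ∀ v w : X, ∀ t : ℝ, HasDerivAt (fun s : ℝ => H (v + s • w)) (F (v + t • w) w) t)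
    (b x : X) (hb : F b (x - b) = 0) :
    H x - H b ≤ L / 2 * ‖x - b‖ ^ 2 := by
  set d := x - b with hd
  have key : H (b + (1:ℝ) • d) - H (b + (0:ℝ) • d) ≤ L * ‖d‖ ^ 2 / 2 := by
    apply deriv_upper (fun s => H (b + s • d)) (fun t => F (b + t • d) d) (hF3 b d)
    intro t ht
    have h := hF1 (b + t • d) b d
    have he : b + t • d - b = t • d := by abel
    rw [he, hb] at h
    have hn : ‖t • d‖ = t * ‖d‖ := by
      rw [norm_smul, Real.norm_eq_abs, abs_of_nonneg ht.1]
    rw [hn] at h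
    have := abs_le.mp h
    nlinarith [this.2]
  have hx : b + (1:ℝ) • d = x := by rw [one_smul, hd]; abel
  have hb0 : b + (0:ℝ) • d = b := by simp
  rw [hx, hb0] at key
  linarith
theorem stmt_18
    {X : Type*} [NormedAddCommGroup X] [InnerProductSpace ℝ X] [CompleteSpace X]
    (F : X → X →L[ℝ] ℝ) (L ν : ℝ) (hL : 0 < L) (hν : 0 < ν)
    (hF1 : ∀ u v w : X, |F u w - F v w| ≤ L * ‖u - v‖ * ‖w‖)
    (hF2 : ∀ u v : X, ν * ‖u - v‖ ^ 2 ≤ F u (u - v) - F v (u - v))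
    (ustar : X) (hustar : ∀ v : X, F ustar v = 0)
    (a : X → X →ₗ[ℝ] X →ₗ[ℝ] ℝ) (α β : ℝ) (hα : 0 < α) (hβ : 0 < β)
    (hcoer : ∀ u v : X, α * ‖v‖ ^ 2 ≤ a u v v)
    (hbdd : ∀ u v w : X, a u v w ≤ β * ‖v‖ * ‖w‖)
    (H : X → ℝ)
    (hF3 : ∀ v w : X, ∀ t : ℝ, HasDerivAt (fun s : ℝ => H (v + s • w)) (F (v + t • w) w) t)
    (XN : ℕ → Submodule ℝ X) (hclosed : ∀ N : ℕ, IsClosed (XN N : Set X))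
    (hnested : ∀ N : ℕ, XN N ≤ XN (N + 1))
    (ustarN : ℕ → X) (hustarN_mem : ∀ N : ℕ, ustarN N ∈ XN N)
    (hustarN : ∀ N : ℕ, ∀ v ∈ XN N, F (ustarN N) v = 0)
    (η : ℕ → X → ℝ) (C₁ C₂ : ℝ) (hC₁ : 1 ≤ C₁) (hC₂ : 1 ≤ C₂)
    (hηnonneg : ∀ N : ℕ, ∀ v ∈ XN N, 0 ≤ η N v)
    (hA1 : ∀ N : ℕ, ∀ v ∈ XN N, ∀ w ∈ XN N, |η N v - η N w| ≤ C₁ * ‖v - w‖)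
    (hA2 : ∀ N : ℕ, ‖ustar - ustarN N‖ ≤ C₂ * η N (ustarN N))
    (C₃ C₅ : ℝ) (hC₃ : C₃ = 1 + β / ν) (hC₅ : C₅ = C₃ * C₁)
    (lam : ℝ) (hlam : 0 < lam) (hlam' : lam < 1 / C₅)
    (q C₇ : ℝ) (hq0 : 0 < q) (hq1 : q < 1) (hC₇ : 0 < C₇)
    (hperturb : ∀ N : ℕ,
      η (N + 1) (ustarN (N + 1)) ^ 2 ≤
        q * η N (ustarN N) ^ 2 + C₇ * ‖ustarN (N + 1) - ustarN N‖ ^ 2)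
    (w u : ℕ → X) (hwmem : ∀ N : ℕ, w N ∈ XN N) (humem : ∀ N : ℕ, u N ∈ XN N)
    (hstep : ∀ N : ℕ, ∀ v ∈ XN N, a (w N) (u N) v = a (w N) (w N) v - F (w N) v)
    (hstop : ∀ N : ℕ, ‖u N - w N‖ ≤ lam * η N (u N))
    (γ qΔ : ℝ) (hγ : γ = ν / (2 * C₇))
    (hqΔ : qΔ = (L * C₂ ^ 2 + 2 * γ * q) / (L * C₂ ^ 2 + 2 * γ)) :
    ∃ C₈ : ℝ, 0 < C₈ ∧
      ∀ N K : ℕ, η (N + K) (u (N + K)) ^ 2 ≤ C₈ * qΔ ^ K * η N (u N) ^ 2 := by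

  -- basic positivity
  have hC₃pos : 0 < C₃ := by rw [hC₃]; positivity
  have hC₅pos : 0 < C₅ := by rw [hC₅]; exact mul_pos hC₃pos (lt_of_lt_of_le one_pos hC₁)
  have hδ1 : C₅ * lam < 1 := by
    have := (lt_div_iff₀ hC₅pos).mp hlam'
    linarith
  set δ := C₅ * lam with hδdef
  have hδ0 : 0 < δ := mul_pos hC₅pos hlam
  have hγpos : 0 < γ := by rw [hγ]; positivity
  set μ := 2 * C₇ / ν with hμdef
  have hμpos : 0 < μ := by positivity
  have hμγ : μ * γ = 1 := by rw [hμdef, hγ]; field_simp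
  have hC₂0 : 0 < C₂ := lt_of_lt_of_le one_pos hC₂
  -- energy
  obtain ⟨E, hEdef⟩ : ∃ E : ℕ → ℝ, ∀ N, E N = H (ustarN N) - H ustar :=
    ⟨_, fun N => rfl⟩
  have hE1 : ∀ N, ν / 2 * ‖ustarN N - ustar‖ ^ 2 ≤ E N := by
    intro N
    rw [hEdef]
    exact pot_lower F ν hF2 H hF3 ustar (ustarN N) (hustar _)
  have hE2 : ∀ N, E N ≤ L / 2 * ‖ustarN N - ustar‖ ^ 2 := by
    intro N
    rw [hEdef]
    exact pot_upper F L hF1 H hF3 ustar (ustarN N) (hustar _)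
  have hE0 : ∀ N, 0 ≤ E N := fun N =>
    le_trans (by positivity) (hE1 N)
  have hE3 : ∀ N, ν / 2 * ‖ustarN (N + 1) - ustarN N‖ ^ 2 ≤ E N - E (N + 1) := by
    intro N
    have hmem : ustarN N - ustarN (N + 1) ∈ XN (N + 1) :=
      Submodule.sub_mem _ (hnested N (hustarN_mem N)) (hustarN_mem (N + 1))
    have h := pot_lower F ν hF2 H hF3 (ustarN (N + 1)) (ustarN N)
      (hustarN (N + 1) _ hmem)
    rw [norm_sub_rev]
    simp only [hEdef]
    linarith
  -- closeness of iterate to discrete solution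
  have hηu_nonneg : ∀ N, 0 ≤ η N (u N) := fun N => hηnonneg N (u N) (humem N)
  have hclose : ∀ N, ‖ustarN N - u N‖ ≤ C₃ * lam * η N (u N) := by
    intro N
    set e := ustarN N - w N with hedef
    have hemem : e ∈ XN N := Submodule.sub_mem _ (hustarN_mem N) (hwmem N)
    have h2 : ν * ‖e‖ ^ 2 ≤ F (ustarN N) e - F (w N) e := hF2 (ustarN N) (w N)
    rw [hustarN N e hemem] at h2
    have h3 : a (w N) (u N) e = a (w N) (w N) e - F (w N) e := hstep N e hemem
    have h4 : a (w N) (u N - w N) e = a (w N) (u N) e - a (w N) (w N) e := by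
      rw [(a (w N)).map_sub]; rfl
    have h5 : a (w N) (u N - w N) e ≤ β * ‖u N - w N‖ * ‖e‖ := hbdd _ _ _
    have h6 : ν * ‖e‖ ^ 2 ≤ β * ‖u N - w N‖ * ‖e‖ := by
      rw [h4, h3] at h5
      linarith
    have h7 : ‖e‖ ≤ β / ν * ‖u N - w N‖ := by
      rcases eq_or_lt_of_le (norm_nonneg e) with h0 | h0
      · rw [← h0]; positivity
      · rw [div_mul_eq_mul_div, le_div_iff₀ hν]
        have : ν * ‖e‖ * ‖e‖ ≤ β * ‖u N - w N‖ * ‖e‖ := by nlinarith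
        have := le_of_mul_le_mul_right this h0
        linarith
    have h8 : ‖ustarN N - u N‖ ≤ ‖e‖ + ‖u N - w N‖ := by
      have : ustarN N - u N = e + (w N - u N) := by rw [hedef]; abel
      rw [this]
      calc ‖e + (w N - u N)‖ ≤ ‖e‖ + ‖w N - u N‖ := norm_add_le _ _
        _ = ‖e‖ + ‖u N - w N‖ := by rw [norm_sub_rev (w N) (u N)]
    have h9 := hstop N
    calc ‖ustarN N - u N‖ ≤ β / ν * ‖u N - w N‖ + ‖u N - w N‖ := by linarith
      _ = C₃ * ‖u N - w N‖ := by rw [hC₃]; ring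
      _ ≤ C₃ * (lam * η N (u N)) := by
          exact mul_le_mul_of_nonneg_left h9 (le_of_lt hC₃pos)
      _ = C₃ * lam * η N (u N) := by ring
  -- estimator equivalence
  have hequiv : ∀ N, |η N (u N) - η N (ustarN N)| ≤ δ * η N (u N) := by
    intro N
    have h := hA1 N (u N) (humem N) (ustarN N) (hustarN_mem N)
    calc |η N (u N) - η N (ustarN N)| ≤ C₁ * ‖u N - ustarN N‖ := h
      _ = C₁ * ‖ustarN N - u N‖ := by rw [norm_sub_rev]
      _ ≤ C₁ * (C₃ * lam * η N (u N)) :=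
          mul_le_mul_of_nonneg_left (hclose N) (by linarith)
      _ = δ * η N (u N) := by rw [hδdef, hC₅]; ring
  have hlo : ∀ N, (1 - δ) * η N (u N) ≤ η N (ustarN N) := by
    intro N
    have := (abs_le.mp (hequiv N)).2
    linarith
  have hhi : ∀ N, η N (ustarN N) ≤ (1 + δ) * η N (u N) := by
    intro N
    have := (abs_le.mp (hequiv N)).1
    linarith
  -- contraction quantities
  have hLC2 : 0 < L * C₂ ^ 2 := by positivity
  have hD : 0 < L * C₂ ^ 2 + 2 * γ := by linarith
  have hqΔD : qΔ * (L * C₂ ^ 2 + 2 * γ) = L * C₂ ^ 2 + 2 * γ * q := by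
    rw [hqΔ]; field_simp
  have hqΔ0 : 0 < qΔ := by
    rw [hqΔ]
    apply div_pos _ hD
    have : 0 < 2 * γ * q := by positivity
    linarith
  have hqΔ1 : qΔ < 1 := by
    rw [hqΔ, div_lt_one hD]
    have : 2 * γ * q < 2 * γ * 1 := by
      apply mul_lt_mul_of_pos_left hq1 (by positivity)
    linarith
  have hident : 2 * γ * (qΔ - q) = L * C₂ ^ 2 * (1 - qΔ) := by linear_combination hqΔD
  -- contraction of Δ
  obtain ⟨Δ, hΔdef⟩ : ∃ Δ : ℕ → ℝ, ∀ N, Δ N = η N (ustarN N) ^ 2 + μ * E N :=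
    ⟨_, fun N => rfl⟩
  have hηstar_nonneg : ∀ N, 0 ≤ η N (ustarN N) :=
    fun N => hηnonneg N (ustarN N) (hustarN_mem N)
  have hEbound : ∀ N, E N ≤ L / 2 * C₂ ^ 2 * η N (ustarN N) ^ 2 := by
    intro N
    have h1 := hE2 N
    have h2 : ‖ustarN N - ustar‖ ≤ C₂ * η N (ustarN N) := by
      rw [norm_sub_rev]; exact hA2 N
    have h3 : ‖ustarN N - ustar‖ ^ 2 ≤ (C₂ * η N (ustarN N)) ^ 2 := by
      have := mul_self_le_mul_self (norm_nonneg (ustarN N - ustar)) h2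
      calc ‖ustarN N - ustar‖ ^ 2 = ‖ustarN N - ustar‖ * ‖ustarN N - ustar‖ := sq _
        _ ≤ C₂ * η N (ustarN N) * (C₂ * η N (ustarN N)) := this
        _ = (C₂ * η N (ustarN N)) ^ 2 := (sq _).symm
    have h4 := mul_le_mul_of_nonneg_left h3 (by positivity : (0:ℝ) ≤ L / 2)
    have h5 : L / 2 * (C₂ * η N (ustarN N)) ^ 2 =
        L / 2 * C₂ ^ 2 * η N (ustarN N) ^ 2 := by ring
    linarith [h4, h5.le, h5.ge]
  have hΔcontr : ∀ N, Δ (N + 1) ≤ qΔ * Δ N := by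
    intro N
    have hp := hperturb N
    have h3 := hE3 N
    have hstep1 : C₇ * ‖ustarN (N + 1) - ustarN N‖ ^ 2 ≤ μ * (E N - E (N + 1)) := by
      have hmC : μ * (ν / 2) = C₇ := by rw [hμdef]; field_simp
      have h4 := mul_le_mul_of_nonneg_left h3 hμpos.le
      have h5 : μ * (ν / 2 * ‖ustarN (N + 1) - ustarN N‖ ^ 2) =
          C₇ * ‖ustarN (N + 1) - ustarN N‖ ^ 2 := by
        linear_combination ‖ustarN (N + 1) - ustarN N‖ ^ 2 * hmC
      linarith [h4, h5.le, h5.ge]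
    have h4 : Δ (N + 1) ≤ q * η N (ustarN N) ^ 2 + μ * E N := by
      simp only [hΔdef]
      linarith
    have h5 : μ * (1 - qΔ) * E N ≤ (qΔ - q) * η N (ustarN N) ^ 2 := by
      have hb := hEbound N
      have hkey : μ * (1 - qΔ) * (L / 2 * C₂ ^ 2) = qΔ - q := by
        linear_combination (-(μ / 2)) * hident + (qΔ - q) * hμγ
      have hc : 0 ≤ μ * (1 - qΔ) := mul_nonneg hμpos.le (by linarith)
      have := mul_le_mul_of_nonneg_left hb hc
      calc μ * (1 - qΔ) * E N ≤ μ * (1 - qΔ) * (L / 2 * C₂ ^ 2 * η N (ustarN N) ^ 2) := this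
        _ = (qΔ - q) * η N (ustarN N) ^ 2 := by rw [← hkey]; ring
    simp only [hΔdef]
    simp only [hΔdef] at h4
    linarith
  have hΔnonneg : ∀ N, 0 ≤ Δ N := by
    intro N
    simp only [hΔdef]
    have := hE0 N
    nlinarith [sq_nonneg (η N (ustarN N))]
  have hΔiter : ∀ N K, Δ (N + K) ≤ qΔ ^ K * Δ N := by
    intro N K
    induction K with
    | zero => simp
    | succ K ih =>
      have h1 : Δ (N + (K + 1)) = Δ ((N + K) + 1) := by ring_nf
      rw [h1, pow_succ]
      calc Δ ((N + K) + 1) ≤ qΔ * Δ (N + K) := hΔcontr (N + K)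
        _ ≤ qΔ * (qΔ ^ K * Δ N) := mul_le_mul_of_nonneg_left ih (le_of_lt hqΔ0)
        _ = qΔ ^ K * qΔ * Δ N := by ring
  -- final constant
  refine ⟨(1 + δ) ^ 2 * (1 + μ * L * C₂ ^ 2 / 2) / (1 - δ) ^ 2, ?_, ?_⟩
  · have h1δ : 0 < 1 - δ := by linarith
    positivity
  intro N K
  set A := η (N + K) (u (N + K)) with hA
  set B := η (N + K) (ustarN (N + K)) with hB
  set a0 := η N (u N) with ha0
  set b0 := η N (ustarN N) with hb0
  have h1δ : 0 < 1 - δ := by linarith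
  have step1 : B ^ 2 ≤ Δ (N + K) := by
    simp only [hΔdef]
    have : 0 ≤ μ * E (N + K) := mul_nonneg hμpos.le (hE0 (N + K))
    linarith
  have step2 := hΔiter N K
  have step3 : Δ N ≤ (1 + μ * L * C₂ ^ 2 / 2) * ((1 + δ) ^ 2 * a0 ^ 2) := by
    simp only [hΔdef]
    have hb := hEbound N
    have hbb : b0 ^ 2 ≤ (1 + δ) ^ 2 * a0 ^ 2 := by
      have h := mul_self_le_mul_self (hηstar_nonneg N) (hhi N)
      have e1 : b0 ^ 2 = b0 * b0 := sq b0
      have e2 : (1 + δ) * a0 * ((1 + δ) * a0) = (1 + δ) ^ 2 * a0 ^ 2 := by ring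
      linarith [h, e2.le, e2.ge]
    have t1 : μ * E N ≤ μ * (L / 2 * C₂ ^ 2 * b0 ^ 2) :=
      mul_le_mul_of_nonneg_left hb hμpos.le
    have t2 : (1 + μ * L * C₂ ^ 2 / 2) * b0 ^ 2 ≤
        (1 + μ * L * C₂ ^ 2 / 2) * ((1 + δ) ^ 2 * a0 ^ 2) :=
      mul_le_mul_of_nonneg_left hbb (by positivity)
    linarith [t1, t2]
  have step4 : (1 - δ) ^ 2 * A ^ 2 ≤ B ^ 2 := by
    have hA0 : 0 ≤ (1 - δ) * A := mul_nonneg h1δ.le (hηu_nonneg (N + K))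
    have h := mul_self_le_mul_self hA0 (hlo (N + K))
    have e1 : (1 - δ) * A * ((1 - δ) * A) = (1 - δ) ^ 2 * A ^ 2 := by ring
    have e2 : B * B = B ^ 2 := (sq B).symm
    linarith [h, e1.le, e1.ge, e2.le, e2.ge]
  have hqK : 0 ≤ qΔ ^ K := pow_nonneg (le_of_lt hqΔ0) K
  have main : (1 - δ) ^ 2 * A ^ 2 ≤
      qΔ ^ K * ((1 + μ * L * C₂ ^ 2 / 2) * ((1 + δ) ^ 2 * a0 ^ 2)) := by
    calc (1 - δ) ^ 2 * A ^ 2 ≤ B ^ 2 := step4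
      _ ≤ Δ (N + K) := step1
      _ ≤ qΔ ^ K * Δ N := step2
      _ ≤ qΔ ^ K * ((1 + μ * L * C₂ ^ 2 / 2) * ((1 + δ) ^ 2 * a0 ^ 2)) :=
          mul_le_mul_of_nonneg_left step3 hqK
  rw [div_mul_eq_mul_div, div_mul_eq_mul_div,
    le_div_iff₀ (by positivity : (0:ℝ) < (1 - δ) ^ 2)]
  have heq : qΔ ^ K * ((1 + μ * L * C₂ ^ 2 / 2) * ((1 + δ) ^ 2 * a0 ^ 2)) =
      (1 + δ) ^ 2 * (1 + μ * L * C₂ ^ 2 / 2) * qΔ ^ K * a0 ^ 2 := by ring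
  linarith [main, heq.le, heq.ge]
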